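/- Complementary slackness / strong duality for discounted MDPs: with V* the fixed point of the Bellman optimality operator, the occupation measure η^π of any stationary policy π that only plays actions attaining the maximum in the Bellman equation satisfies ∑_{x,a} r(x,a) η^π(x,a) = ∑_x μ₀(x) V*(x), i.e., the dual LP optimum equals the primal value ∑_x μ₀(x) V*(x). -/

import Mathlib

open Finset

/-- complementary slackness / strong duality: the occupation
measure of a policy supported on greedy actions attains the primal value
`∑ μ₀ V*`. -/
theorem mdp_lp_strong_duality_greedy
    {X A : Type*} [Fintype X] [Fintype A] [Nonempty X] [Nonempty A]
    (β : ℝ) (hβ : β ∈ Set.Ioo (0:ℝ) 1)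
    (r : X → A → ℝ)
    (μ₀ : X → ℝ) (hμ₀nn : ∀ x, 0 ≤ μ₀ x) (hμ₀sum : ∑ x, μ₀ x = 1)
    (Q : X → A → X → ℝ)
    (hQnn : ∀ x a x', 0 ≤ Q x a x') (hQsum : ∀ x a, ∑ x', Q x a x' = 1)
    (Vstar : X → ℝ)
    (hVstar : ∀ x, Vstar x = Finset.univ.sup' Finset.univ_nonempty
      (fun a => r x a + β * ∑ x', Q x a x' * Vstar x'))
    (η : X → A → ℝ) (hηnn : ∀ x a, 0 ≤ η x a)
    (hflow : ∀ x, ∑ a, η x a = μ₀ x + β * ∑ x', ∑ a', Q x' a' x * η x' a')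
    (hgreedy : ∀ x a, 0 < η x a →
      r x a + β * ∑ x', Q x a x' * Vstar x' = Vstar x) :
    ∑ x, ∑ a, r x a * η x a = ∑ x, μ₀ x * Vstar x := by
  have key : ∀ x a, r x a * η x a
      = Vstar x * η x a - β * ((∑ x', Q x a x' * Vstar x') * η x a) := by
    intro x a
    rcases (hηnn x a).eq_or_lt with h | h
    · rw [← h]; ring
    · have hr := hgreedy x a h
      have : r x a = Vstar x - β * ∑ x', Q x a x' * Vstar x' := by linarith
      rw [this]; ring
  simp_rw [key]
  rw [Finset.sum_congr rfl (fun x _ => Finset.sum_sub_distrib _ _),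
    Finset.sum_sub_distrib]
  have h2 : ∑ x, ∑ a, Vstar x * η x a
      = (∑ x, μ₀ x * Vstar x)
        + β * ∑ x, Vstar x * ∑ x', ∑ a', Q x' a' x * η x' a' := by
    have : ∀ x, ∑ a, Vstar x * η x a
        = μ₀ x * Vstar x + β * (Vstar x * ∑ x', ∑ a', Q x' a' x * η x' a') := by
      intro x
      rw [← Finset.mul_sum, hflow x]; ring
    simp_rw [this]
    rw [Finset.sum_add_distrib, Finset.mul_sum]
  have h3 : ∑ x, ∑ a, β * ((∑ x', Q x a x' * Vstar x') * η x a)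
      = β * ∑ x, Vstar x * ∑ x', ∑ a', Q x' a' x * η x' a' := by
    calc ∑ x, ∑ a, β * ((∑ x', Q x a x' * Vstar x') * η x a)
        = ∑ x, ∑ a, ∑ x', β * (Q x a x' * Vstar x' * η x a) := by
          refine Finset.sum_congr rfl fun x _ => Finset.sum_congr rfl fun a _ => ?_
          rw [Finset.sum_mul, Finset.mul_sum]
      _ = ∑ x, ∑ x', ∑ a, β * (Q x a x' * Vstar x' * η x a) := by
          exact Finset.sum_congr rfl fun x _ => Finset.sum_comm
      _ = ∑ x', ∑ x, ∑ a, β * (Q x a x' * Vstar x' * η x a) := Finset.sum_comm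
      _ = β * ∑ x, Vstar x * ∑ x', ∑ a', Q x' a' x * η x' a' := by
          rw [Finset.mul_sum]
          refine Finset.sum_congr rfl fun x _ => ?_
          simp_rw [Finset.mul_sum]
          refine Finset.sum_congr rfl fun x' _ => Finset.sum_congr rfl fun a' _ => ?_
          ring
  rw [h2, h3]; ring
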